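/- arXiv:2201.12524 — 3 statements merged into one kernel-verified Lean document; each statement's English description precedes it below -/
import Mathlib

section
/- Consider the subset S = {(exp(−(x+2y+z))·cos(x−z), exp(−(x+2y+z))·sin(x−z), exp(−2(x+z))) : x, y, z ∈ ℝ, x ≥ 0, y ≥ 0, z ≥ 0} of ℝ³ and the tetrahedron T = convexHull ℝ {(1,0,1), (0,1,−1), (−1,0,1), (0,−1,−1)} ⊆ ℝ³. Then the three-dimensional Lebesgue measure of S equals (1 − e^{−4π})/8, the Lebesgue measure of T equals 4/3, and hence volume(S) = (3/32)·(1 − e^{−4π}) · volume(T). -/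
open MeasureTheory

open Real Set

noncomputable section

/-- the "sector" set -/
def K (c m : ℝ) : Set (ℝ × ℝ) :=
  {p | 0 < p.1 ^ 2 + p.2 ^ 2 ∧ p.1 ^ 2 + p.2 ^ 2 ≤ c ∧
    |Complex.arg (p.1 + p.2 * Complex.I)| ≤ m}

lemma measurable_argfun : Measurable (fun p : ℝ × ℝ => |Complex.arg (p.1 + p.2 * Complex.I)|) := by
  have h : Measurable (fun p : ℝ × ℝ => (p.1 + p.2 * Complex.I : ℂ)) := by fun_prop
  exact (Complex.measurable_arg.comp h).abs

lemma K_meas (c m : ℝ) : MeasurableSet (K c m) := by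
  have h1 : Measurable fun p : ℝ × ℝ => p.1 ^ 2 + p.2 ^ 2 := by fun_prop
  exact (measurableSet_lt measurable_const h1).inter
    ((measurableSet_le h1 measurable_const).inter
      (measurableSet_le measurable_argfun measurable_const))

lemma sq_le_sqrt_bound {a c : ℝ} (h : a ^ 2 ≤ c) : a ∈ Icc (-sqrt c) (sqrt c) := by
  have h1 : |a| ≤ sqrt c := by
    rw [← Real.sqrt_sq_eq_abs]; exact Real.sqrt_le_sqrt h
  exact abs_le.mp h1

lemma K_subset (c m : ℝ) : K c m ⊆ Icc (-sqrt c) (sqrt c) ×ˢ Icc (-sqrt c) (sqrt c) := by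
  rintro ⟨a, b⟩ ⟨-, h2, -⟩
  have ha : a ^ 2 ≤ c := by nlinarith [sq_nonneg b]
  have hb : b ^ 2 ≤ c := by nlinarith [sq_nonneg a]
  exact ⟨sq_le_sqrt_bound ha, sq_le_sqrt_bound hb⟩

lemma K_fin (c m : ℝ) : volume (K c m) ≠ ⊤ := by
  refine ne_top_of_le_ne_top ?_ (measure_mono (K_subset c m))
  rw [Measure.volume_eq_prod, Measure.prod_prod]
  exact ENNReal.mul_ne_top (by simp [Real.volume_Icc]) (by simp [Real.volume_Icc])

lemma K_volume {c m : ℝ} (hc : 0 < c) (hm0 : 0 ≤ m) (hmπ : m ≤ π) :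
    volume (K c m) = ENNReal.ofReal (m * c) := by
  set box : Set (ℝ × ℝ) := Ioc 0 (sqrt c) ×ˢ Icc (-m) m with hbox
  have hboxm : MeasurableSet box := measurableSet_Ioc.prod measurableSet_Icc
  have step1 : EqOn (fun p : ℝ × ℝ => p.1 • (K c m).indicator (1 : ℝ × ℝ → ℝ) (polarCoord.symm p))
      (box.indicator (fun p : ℝ × ℝ => p.1)) polarCoord.target := by
    rintro ⟨r, θ⟩ hp
    rw [polarCoord_target] at hp
    obtain ⟨hr, hθ⟩ := hp
    simp only [mem_Ioi] at hr
    simp only [mem_Ioo] at hθ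
    have hsymm : polarCoord.symm (r, θ) = (r * cos θ, r * sin θ) := rfl
    have hsq : (r * cos θ) ^ 2 + (r * sin θ) ^ 2 = r ^ 2 := by
      have := sin_sq_add_cos_sq θ; nlinarith
    have harg : Complex.arg ((r * cos θ : ℝ) + (r * sin θ : ℝ) * Complex.I) = θ := by
      have : ((r * cos θ : ℝ) + (r * sin θ : ℝ) * Complex.I) =
          (r : ℂ) * (Complex.cos θ + Complex.sin θ * Complex.I) := by
        push_cast; ring
      rw [this]
      exact Complex.arg_mul_cos_add_sin_mul_I hr ⟨hθ.1, hθ.2.le⟩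
    have hmem : polarCoord.symm (r, θ) ∈ K c m ↔ (r, θ) ∈ box := by
      rw [hsymm]
      constructor
      · rintro ⟨-, h2, h3⟩
        simp only [hsq] at h2
        rw [harg] at h3
        refine ⟨⟨hr, ?_⟩, abs_le.mp h3⟩
        rw [show Real.sqrt c = Real.sqrt c from rfl, ← Real.sqrt_sq hr.le]
        exact Real.sqrt_le_sqrt h2
      · rintro ⟨⟨hr1, hr2⟩, hθ2⟩
        refine ⟨by simpa [hsq] using pow_pos hr 2, ?_, ?_⟩
        · simp only [hsq]
          calc r ^ 2 ≤ sqrt c ^ 2 := by nlinarith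
          _ = c := Real.sq_sqrt hc.le
        · rw [harg]; exact abs_le.mpr hθ2
    by_cases h : (r, θ) ∈ box
    · simp only [indicator_of_mem h, indicator_of_mem (hmem.mpr h), smul_eq_mul, Pi.one_apply, mul_one]
    · simp only [indicator_of_notMem h, indicator_of_notMem (fun hh => h (hmem.mp hh)),
        smul_eq_mul, mul_zero]
  have hJ : volume (Ioo (-π) π ∩ Icc (-m) m) = ENNReal.ofReal (2 * m) := by
    apply le_antisymm
    · calc volume (Ioo (-π) π ∩ Icc (-m) m) ≤ volume (Icc (-m) m) :=
        measure_mono inter_subset_right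
      _ = ENNReal.ofReal (2 * m) := by rw [Real.volume_Icc]; ring_nf
    · calc ENNReal.ofReal (2 * m) = volume (Ioo (-m) m) := by rw [Real.volume_Ioo]; ring_nf
      _ ≤ volume (Ioo (-π) π ∩ Icc (-m) m) := measure_mono
          (subset_inter (Ioo_subset_Ioo (neg_le_neg hmπ) hmπ) Ioo_subset_Icc_self)
  have A : (volume (K c m)).toReal = m * c := by
    rw [← measureReal_def, ← integral_indicator_one (K_meas c m), ← integral_comp_polarCoord_symm,
      setIntegral_congr_fun polarCoord.open_target.measurableSet step1,
      setIntegral_indicator hboxm]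
    have hset : polarCoord.target ∩ box = Ioc 0 (sqrt c) ×ˢ (Ioo (-π) π ∩ Icc (-m) m) := by
      rw [polarCoord_target, hbox, Set.prod_inter_prod, inter_eq_right.mpr Ioc_subset_Ioi_self]
    rw [hset, Measure.volume_eq_prod]
    calc ∫ p in Ioc 0 (sqrt c) ×ˢ (Ioo (-π) π ∩ Icc (-m) m), p.1 ∂(volume.prod volume)
        = ∫ p in Ioc 0 (sqrt c) ×ˢ (Ioo (-π) π ∩ Icc (-m) m),
            (fun x : ℝ => x) p.1 * (fun _ : ℝ => (1:ℝ)) p.2 ∂(volume.prod volume) := by simp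
      _ = (∫ x in Ioc 0 (sqrt c), x) * ∫ _y in Ioo (-π) π ∩ Icc (-m) m, (1:ℝ) :=
          setIntegral_prod_mul (μ := volume) (ν := volume) (fun x : ℝ => x)
            (fun _ : ℝ => (1:ℝ)) (Ioc 0 (sqrt c)) (Ioo (-π) π ∩ Icc (-m) m)
      _ = m * c := by
          rw [← intervalIntegral.integral_of_le (sqrt_nonneg c), integral_id, setIntegral_const,
            measureReal_def, hJ, smul_eq_mul, mul_one, Real.sq_sqrt hc.le, ENNReal.toReal_ofReal (by linarith)]
          ring
  rw [← ENNReal.ofReal_toReal (K_fin c m), A]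

lemma vec_eq (v : Fin 3 → ℝ) (a b c : ℝ) :
    v = ![a, b, c] ↔ v 0 = a ∧ v 1 = b ∧ v 2 = c := by
  constructor
  · rintro rfl; refine ⟨rfl, rfl, rfl⟩
  · rintro ⟨h0, h1, h2⟩; funext i; fin_cases i <;> simpa

lemma arg_rep {ρ θ : ℝ} (hρ : 0 < ρ) (hθ : θ ∈ Set.Ioc (-π) π) :
    Complex.arg ((ρ * cos θ : ℝ) + (ρ * sin θ : ℝ) * Complex.I) = θ := by
  have h : ((ρ * cos θ : ℝ) + (ρ * sin θ : ℝ) * Complex.I) =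
      (ρ : ℂ) * (Complex.cos θ + Complex.sin θ * Complex.I) := by push_cast; ring
  rw [h]; exact Complex.arg_mul_cos_add_sin_mul_I hρ hθ

lemma S_mem (v : Fin 3 → ℝ) :
    (∃ x y z : ℝ, 0 ≤ x ∧ 0 ≤ y ∧ 0 ≤ z ∧
      v = ![Real.exp (-(x + 2 * y + z)) * Real.cos (x - z),
            Real.exp (-(x + 2 * y + z)) * Real.sin (x - z),
            Real.exp (-(2 * (x + z)))]) ↔
    (v 2 ∈ Ioc (0:ℝ) 1 ∧ (v 0, v 1) ∈ K (v 2) (min (-Real.log (v 2) / 2) π)) := by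
  constructor
  · rintro ⟨x, y, z, hx, hy, hz, hv⟩
    rw [vec_eq] at hv
    obtain ⟨h0, h1, h2⟩ := hv
    set ρ := Real.exp (-(x + 2 * y + z)) with hρdef
    have hρ : 0 < ρ := exp_pos _
    have hv2 : v 2 = Real.exp (-(2 * (x + z))) := h2
    have hlog : -Real.log (v 2) / 2 = x + z := by
      rw [hv2, Real.log_exp]; ring
    have hsq : v 0 ^ 2 + v 1 ^ 2 = ρ ^ 2 := by
      rw [h0, h1]
      have := sin_sq_add_cos_sq (x - z); nlinarith
    refine ⟨⟨by rw [hv2]; exact exp_pos _, by rw [hv2]; exact exp_le_one_iff.mpr (by nlinarith)⟩,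
      ?_, ?_, ?_⟩
    · simpa [hsq] using pow_pos hρ 2
    · show v 0 ^ 2 + v 1 ^ 2 ≤ v 2
      rw [hsq, hv2, hρdef, ← Real.exp_nat_mul]
      · exact exp_le_exp.mpr (by push_cast; nlinarith)
    · show |Complex.arg (v 0 + v 1 * Complex.I)| ≤ _
      rw [hlog]
      refine le_min ?_ (Complex.abs_arg_le_pi _)
      rcases le_or_gt π (x + z) with h | h
      · exact (Complex.abs_arg_le_pi _).trans h
      · have habs : |x - z| ≤ x + z := abs_le.mpr ⟨by linarith, by linarith⟩
        rw [h0, h1, arg_rep hρ ⟨by cases abs_le.mp habs; linarith, by linarith [abs_le.mp habs]⟩]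
        exact habs
  · rintro ⟨⟨hv2pos, hv2le⟩, hpos, hle, harg⟩
    simp only [K, mem_setOf_eq] at hpos hle harg
    set s := -Real.log (v 2) / 2 with hsdef
    have hs : 0 ≤ s := by
      have : Real.log (v 2) ≤ 0 := Real.log_nonpos hv2pos.le hv2le
      simp only [hsdef]; linarith
    set ρ := Real.sqrt (v 0 ^ 2 + v 1 ^ 2) with hρdef
    have hρpos : 0 < ρ := Real.sqrt_pos.mpr hpos
    set θ := Complex.arg (v 0 + v 1 * Complex.I) with hθdef
    have hθs : |θ| ≤ s := le_trans harg (min_le_left _ _)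
    have hρle : ρ ≤ Real.exp (-s) := by
      have h1 : Real.exp (-s) = Real.sqrt (v 2) := by
        rw [show -s = Real.log (v 2) / 2 by rw [hsdef]; ring, ← Real.log_sqrt hv2pos.le,
          Real.exp_log (Real.sqrt_pos.mpr hv2pos)]
      rw [h1, hρdef]
      exact Real.sqrt_le_sqrt hle
    have hlogρ : Real.log ρ ≤ -s := by
      calc Real.log ρ ≤ Real.log (Real.exp (-s)) :=
        Real.log_le_log hρpos hρle
      _ = -s := Real.log_exp _
    have habsz : ‖(v 0 + v 1 * Complex.I : ℂ)‖ = ρ := by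
      rw [Complex.norm_def, Complex.normSq_add_mul_I, hρdef]
    refine ⟨(s + θ) / 2, (-Real.log ρ - s) / 2, (s - θ) / 2, ?_, ?_, ?_, ?_⟩
    · have := abs_le.mp hθs; linarith
    · linarith
    · have := abs_le.mp hθs; linarith
    · have hxyz : (s + θ) / 2 + 2 * ((-Real.log ρ - s) / 2) + (s - θ) / 2 = -Real.log ρ := by ring
      have hxz : (s + θ) / 2 - (s - θ) / 2 = θ := by ring
      have hss : 2 * ((s + θ) / 2 + (s - θ) / 2) = -Real.log (v 2) := by rw [hsdef]; ring
      rw [vec_eq, hxyz, hxz, hss]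
      have hexpρ : Real.exp (-(-Real.log ρ)) = ρ := by
        rw [neg_neg, Real.exp_log hρpos]
      refine ⟨?_, ?_, by rw [neg_neg, Real.exp_log hv2pos]⟩
      · rw [hexpρ, ← habsz, hθdef]
        rw [Complex.norm_mul_cos_arg]
        simp
      · rw [hexpρ, ← habsz, hθdef]
        rw [Complex.norm_mul_sin_arg]
        simp

lemma f_integrableOn : IntegrableOn (fun c : ℝ => min (-Real.log c / 2) π * c) (Ioc 0 1) := by
  have hmeas : Measurable fun c : ℝ => min (-Real.log c / 2) π * c :=
    ((Real.measurable_log.neg.div_const 2).min measurable_const).mul measurable_id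
  refine Integrable.mono' (integrable_const π) hmeas.aestronglyMeasurable ?_
  refine (ae_restrict_iff' measurableSet_Ioc).mpr (ae_of_all _ fun c hc => ?_)
  have hlog : Real.log c ≤ 0 := Real.log_nonpos hc.1.le hc.2
  have h0 : 0 ≤ min (-Real.log c / 2) π := le_min (by linarith) pi_pos.le
  rw [Real.norm_eq_abs, abs_of_nonneg (mul_nonneg h0 hc.1.le)]
  calc min (-Real.log c / 2) π * c ≤ π * 1 :=
    mul_le_mul (min_le_right _ _) hc.2 hc.1.le pi_pos.le
  _ = π := mul_one π

lemma Jcalc : ∫ c in Ioc (0:ℝ) 1, min (-Real.log c / 2) π * c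
    = (1 - Real.exp (-(4 * π))) / 8 := by
  set a := Real.exp (-(2 * π)) with hadef
  have ha : 0 < a := exp_pos _
  have ha1 : a ≤ 1 := exp_le_one_iff.mpr (by nlinarith [pi_pos])
  have hsplit : Ioc (0:ℝ) 1 = Ioc 0 a ∪ Ioc a 1 := (Ioc_union_Ioc_eq_Ioc ha.le ha1).symm
  rw [hsplit, setIntegral_union (Ioc_disjoint_Ioc_of_le le_rfl) measurableSet_Ioc
    (f_integrableOn.mono_set (by rw [hsplit]; exact subset_union_left))
    (f_integrableOn.mono_set (by rw [hsplit]; exact subset_union_right))]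
  have h1 : ∫ c in Ioc (0:ℝ) a, min (-Real.log c / 2) π * c = π * (a ^ 2 / 2) := by
    rw [setIntegral_congr_fun measurableSet_Ioc (g := fun c => π * c) ?_]
    · rw [← intervalIntegral.integral_of_le ha.le, intervalIntegral.integral_const_mul,
        integral_id]
      norm_num
    · intro c hc
      have : Real.log c ≤ -(2 * π) := by
        calc Real.log c ≤ Real.log a := Real.log_le_log hc.1 hc.2
        _ = -(2 * π) := Real.log_exp _
      simp only
      rw [min_eq_right (by linarith)]
  have h2 : ∫ c in Ioc a 1, min (-Real.log c / 2) π * c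
      = (1 / 8 - 0) - (a ^ 2 / 8 - a ^ 2 * (-(2 * π)) / 4) := by
    rw [← intervalIntegral.integral_of_le ha1]
    have := intervalIntegral.integral_eq_sub_of_hasDerivAt
      (f := fun c : ℝ => c ^ 2 / 8 - c ^ 2 * Real.log c / 4)
      (f' := fun c : ℝ => min (-Real.log c / 2) π * c) (a := a) (b := 1) ?_ ?_
    · rw [this]
      rw [Real.log_one, Real.log_exp]
      ring_nf
    · intro x hx
      rw [uIcc_of_le ha1] at hx
      have hx0 : 0 < x := lt_of_lt_of_le ha hx.1
      have hmin : min (-Real.log x / 2) π = -Real.log x / 2 := by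
        apply min_eq_left
        have : -(2 * π) ≤ Real.log x := by
          calc -(2*π) = Real.log a := (Real.log_exp _).symm
          _ ≤ Real.log x := Real.log_le_log ha hx.1
        linarith
      have hd : HasDerivAt (fun c : ℝ => c ^ 2 / 8 - c ^ 2 * Real.log c / 4)
          ((2 * x ^ 1) / 8 - (2 * x ^ 1 * Real.log x + x ^ 2 * x⁻¹) / 4) x := by
        have hp : HasDerivAt (fun c : ℝ => c ^ 2) (2 * x ^ 1) x := by
          simpa using hasDerivAt_pow 2 x
        exact ((hp.div_const 8).sub ((hp.mul (Real.hasDerivAt_log hx0.ne')).div_const 4))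
      refine hd.congr_deriv ?_
      simp only [hmin]
      field_simp
      ring
    · apply intervalIntegrable_iff.mpr
      rw [uIoc_of_le ha1]
      exact f_integrableOn.mono_set (fun x hx => ⟨lt_of_lt_of_le ha hx.1.le |>.trans_le le_rfl |> fun _ => lt_of_lt_of_le ha hx.1.le, hx.2⟩)
  rw [h1, h2]
  have haa : a ^ 2 = Real.exp (-(4 * π)) := by
    rw [hadef, sq, ← Real.exp_add]; ring_nf
  rw [haa]; ring

lemma T_integral : ∫ c in Icc (-1:ℝ) 1, (1 + c) * (1 - c) = 4 / 3 := by
  rw [integral_Icc_eq_integral_Ioc, ← intervalIntegral.integral_of_le (by norm_num : (-1:ℝ) ≤ 1)]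
  have := intervalIntegral.integral_eq_sub_of_hasDerivAt
    (f := fun c : ℝ => c - c ^ 3 / 3) (f' := fun c : ℝ => (1 + c) * (1 - c))
    (a := -1) (b := 1) ?_ ?_
  · rw [this]; norm_num
  · intro x _
    have hd : HasDerivAt (fun c : ℝ => c - c ^ 3 / 3) (1 - ((3:ℕ) * x ^ 2) / 3) x :=
      (hasDerivAt_id x).sub ((hasDerivAt_pow 3 x).div_const 3)
    refine hd.congr_deriv ?_
    push_cast
    ring
  · exact (Continuous.intervalIntegrable (by continuity) _ _)

lemma comb_abs {A B a b p q : ℝ} (hp : 0 ≤ p) (hq : 0 ≤ q) (ha : |a| ≤ A) (hb : |b| ≤ B) :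
    |p * a + q * b| ≤ p * A + q * B := by
  calc |p * a + q * b| ≤ |p * a| + |q * b| := abs_add_le _ _
    _ = p * |a| + q * |b| := by rw [abs_mul, abs_mul, abs_of_nonneg hp, abs_of_nonneg hq]
    _ ≤ p * A + q * B := by gcongr

lemma T_hull : convexHull ℝ {![(1:ℝ), 0, 1], ![0, 1, -1], ![-1, 0, 1], ![0, -1, -1]}
    = {v : Fin 3 → ℝ | |2 * v 0| ≤ 1 + v 2 ∧ |2 * v 1| ≤ 1 - v 2} := by
  apply le_antisymm
  · apply convexHull_min
    · rintro v (rfl | rfl | rfl | rfl) <;>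
        constructor <;>
        · show |(2:ℝ) * _| ≤ _
          norm_num [Matrix.cons_val_two, Matrix.vecHead, Matrix.vecTail]
    · rintro v ⟨hv1, hv2⟩ w ⟨hw1, hw2⟩ p q hp hq hpq
      have key : ∀ (i : Fin 3), (p • v + q • w) i = p * v i + q * w i := fun i => rfl
      constructor <;> simp only [mem_setOf_eq, key]
      · calc |2 * (p * v 0 + q * w 0)| = |p * (2 * v 0) + q * (2 * w 0)| := by
              rw [show 2 * (p * v 0 + q * w 0) = p * (2 * v 0) + q * (2 * w 0) from by ring]
          _ ≤ p * (1 + v 2) + q * (1 + w 2) := comb_abs hp hq hv1 hw1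
          _ = (p + q) + (p * v 2 + q * w 2) := by ring
          _ = 1 + (p * v 2 + q * w 2) := by rw [hpq]
      · calc |2 * (p * v 1 + q * w 1)| = |p * (2 * v 1) + q * (2 * w 1)| := by
              rw [show 2 * (p * v 1 + q * w 1) = p * (2 * v 1) + q * (2 * w 1) from by ring]
          _ ≤ p * (1 - v 2) + q * (1 - w 2) := comb_abs hp hq hv2 hw2
          _ = (p + q) - (p * v 2 + q * w 2) := by ring
          _ = 1 - (p * v 2 + q * w 2) := by rw [hpq]
  · rintro v ⟨h1, h2⟩
    obtain ⟨h1a, h1b⟩ := abs_le.mp h1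
    obtain ⟨h2a, h2b⟩ := abs_le.mp h2
    set w : Fin 4 → ℝ := ![(1 + v 2 + 2 * v 0) / 4, (1 - v 2 + 2 * v 1) / 4,
      (1 + v 2 - 2 * v 0) / 4, (1 - v 2 - 2 * v 1) / 4] with hw
    set z : Fin 4 → (Fin 3 → ℝ) := ![![(1:ℝ), 0, 1], ![0, 1, -1], ![-1, 0, 1], ![0, -1, -1]]
      with hz
    have hsum : v = ∑ i : Fin 4, w i • z i := by
      rw [Fin.sum_univ_four]
      funext j
      fin_cases j <;> simp [hw, hz] <;> ring
    rw [hsum]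
    refine (convex_convexHull ℝ _).sum_mem ?_ ?_ ?_
    · intro i _
      fin_cases i <;> simp [hw] <;> linarith
    · rw [Fin.sum_univ_four]
      simp [hw]
      ring
    · intro i _
      apply subset_convexHull
      fin_cases i <;> simp [hz]

noncomputable def E3 : (Fin 3 → ℝ) ≃ᵐ ℝ × (ℝ × ℝ) :=
  (MeasurableEquiv.piFinSuccAbove (fun _ : Fin 3 => ℝ) 2).trans
    ((MeasurableEquiv.refl ℝ).prodCongr (MeasurableEquiv.finTwoArrow))

lemma E3_apply (v : Fin 3 → ℝ) : E3 v = (v 2, (v 0, v 1)) := by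
  simp [E3, MeasurableEquiv.piFinSuccAbove, MeasurableEquiv.finTwoArrow,
    MeasurableEquiv.prodCongr, MeasurableEquiv.trans, Fin.succAbove]
  constructor <;> rfl

lemma E3_mp : MeasurePreserving E3 volume volume := by
  have h1 := volume_preserving_piFinSuccAbove (fun _ : Fin 3 => ℝ) 2
  have h2 : MeasurePreserving
      (((MeasurableEquiv.refl ℝ).prodCongr (MeasurableEquiv.finTwoArrow)) :
        ℝ × (Fin 2 → ℝ) → ℝ × (ℝ × ℝ)) volume volume := by
    have := (MeasurePreserving.id (volume : Measure ℝ)).prod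
      (volume_preserving_finTwoArrow ℝ)
    exact this
  exact h2.comp h1

/-- In a joint eigenbasis, the accessible maps of the cyclic group of order 4 with
linearly independent elements form the set `S` below, of volume `(1 − e^{−4π})/8`; the group
polytope is the tetrahedron `T` of volume `4/3`, so accessible maps occupy the fraction
`(3/32)(1 − e^{−4π})` of the polytope. -/
theorem cyclic_four_group_accessible_volume
    (S : Set (Fin 3 → ℝ))
    (hS : S = {v : Fin 3 → ℝ | ∃ x y z : ℝ, 0 ≤ x ∧ 0 ≤ y ∧ 0 ≤ z ∧
      v = ![Real.exp (-(x + 2 * y + z)) * Real.cos (x - z),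
            Real.exp (-(x + 2 * y + z)) * Real.sin (x - z),
            Real.exp (-(2 * (x + z)))]})
    (T : Set (Fin 3 → ℝ))
    (hT : T = convexHull ℝ
      {![(1 : ℝ), 0, 1], ![0, 1, -1], ![-1, 0, 1], ![0, -1, -1]}) :
    volume S = ENNReal.ofReal ((1 - Real.exp (-(4 * Real.pi))) / 8) ∧
    volume T = ENNReal.ofReal (4 / 3) ∧
    volume S = ENNReal.ofReal (3 / 32 * (1 - Real.exp (-(4 * Real.pi)))) * volume T := by
  -- the set S in product coordinates
  set AS : Set (ℝ × (ℝ × ℝ)) := {q | (0 < q.1 ∧ q.1 ≤ 1) ∧ 0 < q.2.1 ^ 2 + q.2.2 ^ 2 ∧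
      q.2.1 ^ 2 + q.2.2 ^ 2 ≤ q.1 ∧
      |Complex.arg (q.2.1 + q.2.2 * Complex.I)| ≤ min (-Real.log q.1 / 2) π} with hAS
  have hASmeas : MeasurableSet AS := by
    have hf : Measurable fun q : ℝ × ℝ × ℝ => q.2.1 ^ 2 + q.2.2 ^ 2 := by fun_prop
    have hg : Measurable fun q : ℝ × ℝ × ℝ => |Complex.arg (q.2.1 + q.2.2 * Complex.I)| :=
      measurable_argfun.comp measurable_snd
    have hh : Measurable fun q : ℝ × ℝ × ℝ => min (-Real.log q.1 / 2) π :=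
      ((Real.measurable_log.comp measurable_fst).neg.div_const 2).min measurable_const
    exact ((measurableSet_lt measurable_const measurable_fst).inter
        (measurableSet_le measurable_fst measurable_const)).inter
      ((measurableSet_lt measurable_const hf).inter
        ((measurableSet_le hf measurable_fst).inter (measurableSet_le hg hh)))
  have hSA : S = ⇑E3 ⁻¹' AS := by
    ext v
    rw [hS, mem_setOf_eq, S_mem v, mem_preimage, E3_apply]
    simp only [hAS, mem_setOf_eq, K, mem_Ioc]
    try tauto
  have hvolS : volume S = ENNReal.ofReal ((1 - Real.exp (-(4 * π))) / 8) := by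
    rw [hSA, E3_mp.measure_preimage hASmeas.nullMeasurableSet, Measure.volume_eq_prod,
      Measure.prod_apply hASmeas]
    have hslice : ∀ c : ℝ, (volume : Measure (ℝ × ℝ)) (Prod.mk c ⁻¹' AS)
        = (Ioc (0:ℝ) 1).indicator
            (fun c => ENNReal.ofReal (min (-Real.log c / 2) π * c)) c := by
      intro c
      by_cases hc : c ∈ Ioc (0:ℝ) 1
      · have hpre : Prod.mk c ⁻¹' AS = K c (min (-Real.log c / 2) π) := by
          ext p
          simp only [hAS, mem_preimage, mem_setOf_eq, K]
          exact ⟨fun h => h.2, fun h => ⟨⟨hc.1, hc.2⟩, h⟩⟩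
        rw [hpre, indicator_of_mem hc]
        have hm0 : 0 ≤ min (-Real.log c / 2) π :=
          le_min (by linarith [Real.log_nonpos hc.1.le hc.2]) pi_pos.le
        exact K_volume hc.1 hm0 (min_le_right _ _)
      · have hpre : Prod.mk c ⁻¹' AS = (∅ : Set (ℝ × ℝ)) := by
          ext p
          simp only [hAS, mem_preimage, mem_setOf_eq, mem_empty_iff_false, iff_false]
          rintro ⟨⟨h1, h2⟩, -⟩
          exact hc ⟨h1, h2⟩
        rw [hpre, measure_empty, indicator_of_notMem hc]
    rw [lintegral_congr hslice, lintegral_indicator measurableSet_Ioc _]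
    rw [← ofReal_integral_eq_lintegral_ofReal f_integrableOn
      ((ae_restrict_iff' measurableSet_Ioc).mpr (ae_of_all _ fun c hc =>
        mul_nonneg (le_min (by linarith [Real.log_nonpos hc.1.le hc.2]) pi_pos.le) hc.1.le))]
    rw [Jcalc]
  -- the tetrahedron in product coordinates
  set AT : Set (ℝ × (ℝ × ℝ)) := {q | |2 * q.2.1| ≤ 1 + q.1 ∧ |2 * q.2.2| ≤ 1 - q.1} with hAT
  have hATmeas : MeasurableSet AT := by
    have h1 : Measurable fun q : ℝ × ℝ × ℝ => |2 * q.2.1| := by fun_prop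
    have h2 : Measurable fun q : ℝ × ℝ × ℝ => |2 * q.2.2| := by fun_prop
    exact (measurableSet_le h1 (by fun_prop)).inter (measurableSet_le h2 (by fun_prop))
  have hTA : T = ⇑E3 ⁻¹' AT := by
    ext v
    rw [hT, T_hull, mem_setOf_eq, mem_preimage, E3_apply]
    exact Iff.rfl
  have hvolT : volume T = ENNReal.ofReal (4 / 3) := by
    rw [hTA, E3_mp.measure_preimage hATmeas.nullMeasurableSet, Measure.volume_eq_prod,
      Measure.prod_apply hATmeas]
    have hslice : ∀ c : ℝ, (volume : Measure (ℝ × ℝ)) (Prod.mk c ⁻¹' AT)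
        = (Icc (-1:ℝ) 1).indicator (fun c => ENNReal.ofReal ((1 + c) * (1 - c))) c := by
      intro c
      have hpre : Prod.mk c ⁻¹' AT
          = Icc (-(1 + c)/2) ((1 + c)/2) ×ˢ Icc (-(1 - c)/2) ((1 - c)/2) := by
        ext p
        simp only [hAT, mem_preimage, mem_setOf_eq, prodMk_mem_set_prod_eq, mem_Icc, abs_le]
        constructor <;> intro h <;>
          exact ⟨⟨by linarith [h.1.1, h.1.2], by linarith [h.1.1, h.1.2]⟩,
            ⟨by linarith [h.2.1, h.2.2], by linarith [h.2.1, h.2.2]⟩⟩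
      rw [hpre, Measure.volume_eq_prod, Measure.prod_prod, Real.volume_Icc, Real.volume_Icc]
      have e1 : (1 + c)/2 - -(1 + c)/2 = 1 + c := by ring
      have e2 : (1 - c)/2 - -(1 - c)/2 = 1 - c := by ring
      rw [e1, e2]
      by_cases hc : c ∈ Icc (-1:ℝ) 1
      · rw [indicator_of_mem hc, ENNReal.ofReal_mul (by linarith [hc.1])]
      · rw [indicator_of_notMem hc]
        rw [mem_Icc, not_and_or, not_le, not_le] at hc
        rcases hc with hc | hc
        · rw [ENNReal.ofReal_of_nonpos (by linarith), zero_mul]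
        · rw [ENNReal.ofReal_of_nonpos (by linarith : 1 - c ≤ 0), mul_zero]
    rw [lintegral_congr hslice, lintegral_indicator measurableSet_Icc _]
    rw [← ofReal_integral_eq_lintegral_ofReal
      ((Continuous.integrableOn_Icc (by continuity)))
      ((ae_restrict_iff' measurableSet_Icc).mpr (ae_of_all _ fun c hc =>
        mul_nonneg (by linarith [hc.1]) (by linarith [hc.2])))]
    rw [T_integral]
  refine ⟨hvolS, hvolT, ?_⟩
  rw [hvolS, hvolT, ← ENNReal.ofReal_mul]
  · congr 1
    ring
  · have : Real.exp (-(4 * π)) ≤ 1 := exp_le_one_iff.mpr (by nlinarith [pi_pos])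
    nlinarith

end
end

section
/- Let n ≥ 1, let G = Fin n → ZMod 2, and for s, g ∈ G define χ_s(g) ∈ ℝ by χ_s(g) = 1 if ∑_i s_i·g_i = 0 in ZMod 2 and χ_s(g) = −1 otherwise. Let I = {s ∈ G : s ≠ 0} (a set of 2ⁿ − 1 indices). Define S ⊆ (I → ℝ) as the set of all y such that there exists x : I → ℝ with x(g) ≥ 0 for all g and y(s) = exp(∑_{g∈I} x(g)·(χ_s(g) − 1)) for every s ∈ I; and let P = convexHull ℝ {(fun s ↦ χ_s(g)) : g ∈ G} ⊆ (I → ℝ). Then, with respect to Lebesgue measure on I → ℝ, 2^{n·2ⁿ} · volume(S) = (2ⁿ)! · volume(P); i.e. the accessibility volume ratio for the group (Z₂)ⁿ equals (2ⁿ)!/2^{n·2ⁿ}. -/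
set_option maxHeartbeats 1000000

open MeasureTheory Set Real

theorem vol_corner (m : ℕ) : ∀ (c : ℝ), 0 ≤ c →
    volume {x : Fin m → ℝ | (∀ i, 0 ≤ x i) ∧ ∑ i, x i ≤ c}
      = ENNReal.ofReal (c ^ m / m.factorial) := by
  induction m with
  | zero =>
    intro c hc
    have h : {x : Fin 0 → ℝ | (∀ i, 0 ≤ x i) ∧ ∑ i, x i ≤ c} = univ := by
      ext x; simp [hc, Fin.elim0]
    rw [h]
    simp [MeasureTheory.volume_pi, Measure.pi_univ]
  | succ m ih =>
    intro c hc
    have e := (MeasureTheory.volume_preserving_piFinSuccAbove (fun _ : Fin (m+1) => ℝ) 0)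
    set T : Set (ℝ × (Fin m → ℝ)) :=
      {p | 0 ≤ p.1 ∧ p.1 ≤ c ∧ ((∀ i, 0 ≤ p.2 i) ∧ ∑ i, p.2 i ≤ c - p.1)} with hT
    have hTm : MeasurableSet T := by
      apply MeasurableSet.inter
      · exact measurable_fst measurableSet_Ici
      apply MeasurableSet.inter
      · exact measurable_fst measurableSet_Iic
      apply MeasurableSet.inter
      · have h2 : {p : ℝ × (Fin m → ℝ) | ∀ i, 0 ≤ p.2 i} = ⋂ i, {p | 0 ≤ p.2 i} := by
          ext p; simp
        show MeasurableSet {p : ℝ × (Fin m → ℝ) | ∀ i, 0 ≤ p.2 i}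
        rw [h2]
        exact MeasurableSet.iInter fun i =>
          measurableSet_le measurable_const (measurable_snd.eval)
      · exact measurableSet_le (Finset.measurable_sum _ fun i _ =>
          (measurable_snd.eval : Measurable fun p : ℝ × (Fin m → ℝ) => p.2 i))
          (measurable_const.sub measurable_fst)
    have hpre : (MeasurableEquiv.piFinSuccAbove (fun _ : Fin (m+1) => ℝ) 0) ⁻¹' T
        = {x : Fin (m+1) → ℝ | (∀ i, 0 ≤ x i) ∧ ∑ i, x i ≤ c} := by
      ext x
      simp only [mem_preimage, mem_setOf_eq, hT,
        MeasurableEquiv.coe_mk, MeasurableEquiv.piFinSuccAbove_apply, Fin.insertNthEquiv_symm_apply,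
        Fin.removeNth, Fin.succAbove_zero]
      constructor
      · rintro ⟨h0, hc1, hpos, hsum⟩
        refine ⟨fun i => ?_, ?_⟩
        · rcases Fin.eq_zero_or_eq_succ i with rfl | ⟨j, rfl⟩
          · exact h0
          · exact hpos j
        · rw [Fin.sum_univ_succ]; linarith
      · rintro ⟨hpos, hsum⟩
        rw [Fin.sum_univ_succ] at hsum
        have hs0 : (0:ℝ) ≤ ∑ i : Fin m, x i.succ :=
          Finset.sum_nonneg fun i _ => hpos i.succ
        exact ⟨hpos 0, by linarith, fun i => hpos i.succ, by linarith⟩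
    have key : volume {x : Fin (m+1) → ℝ | (∀ i, 0 ≤ x i) ∧ ∑ i, x i ≤ c}
        = (volume.prod volume) T := by
      rw [← hpre]
      exact e.measure_preimage hTm.nullMeasurableSet
    rw [key, Measure.prod_apply hTm]
    have hslice : ∀ t : ℝ, volume (Prod.mk t ⁻¹' T)
        = (Icc (0:ℝ) c).indicator (fun t => ENNReal.ofReal ((c - t) ^ m / m.factorial)) t := by
      intro t
      by_cases ht : t ∈ Icc (0:ℝ) c
      · rw [indicator_of_mem ht]
        have h3 : Prod.mk t ⁻¹' T = {y : Fin m → ℝ | (∀ i, 0 ≤ y i) ∧ ∑ i, y i ≤ c - t} := by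
          ext y; simp [hT, ht.1, ht.2]
        rw [h3, ih _ (by simp [ht.2, sub_nonneg])]
      · rw [indicator_of_notMem ht]
        have h4 : Prod.mk t ⁻¹' T = ∅ := by
          ext y
          simp only [mem_preimage, hT, mem_setOf_eq, mem_empty_iff_false, iff_false, not_and]
          intro h0 hc1
          exact absurd ⟨h0, hc1⟩ ht
        simp [h4]
    simp_rw [hslice]
    rw [lintegral_indicator measurableSet_Icc]
    have hnn : 0 ≤ᵐ[volume.restrict (Icc (0:ℝ) c)] fun t => (c - t) ^ m / m.factorial := by
      rw [Filter.EventuallyLE, ae_restrict_iff' measurableSet_Icc]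
      filter_upwards with t ht
      have : (0:ℝ) ≤ c - t := by simp [sub_nonneg, ht.2]
      positivity
    have hint : IntegrableOn (fun t => (c - t) ^ m / m.factorial) (Icc (0:ℝ) c) := by
      apply Continuous.integrableOn_Icc
      continuity
    rw [← ofReal_integral_eq_lintegral_ofReal hint hnn]
    congr 1
    rw [MeasureTheory.integral_Icc_eq_integral_Ioc, ← intervalIntegral.integral_of_le hc]
    have : ∫ t in (0:ℝ)..c, (c - t) ^ m / m.factorial
        = (∫ t in (0:ℝ)..c, (c - t) ^ m) / m.factorial := by
      rw [intervalIntegral.integral_div]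
    rw [this, intervalIntegral.integral_comp_sub_left (fun u => u ^ m) c]
    simp only [sub_zero, sub_self]
    rw [integral_pow]
    rw [Nat.factorial_succ]
    have hm : (0:ℝ) < m.factorial := by positivity
    push_cast
    rw [zero_pow (Nat.succ_ne_zero m), sub_zero]
    field_simp


theorem vol_corner' (ι : Type*) [Fintype ι] :
    volume {x : ι → ℝ | (∀ i, 0 ≤ x i) ∧ ∑ i, x i ≤ 1}
      = ENNReal.ofReal (1 / (Fintype.card ι).factorial) := by
  classical
  set d := Fintype.card ι
  set e : Fin d ≃ ι := (Fintype.equivFin ι).symm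
  have mp := MeasureTheory.volume_measurePreserving_piCongrLeft (fun _ : ι => ℝ) e
  have hpre : (MeasurableEquiv.piCongrLeft (fun _ : ι => ℝ) e) ⁻¹'
      {x : ι → ℝ | (∀ i, 0 ≤ x i) ∧ ∑ i, x i ≤ 1}
      = {x : Fin d → ℝ | (∀ i, 0 ≤ x i) ∧ ∑ i, x i ≤ 1} := by
    ext x
    have happ : ∀ j : ι, (MeasurableEquiv.piCongrLeft (fun _ : ι => ℝ) e) x j = x (e.symm j) := by
      intro j
      simp [MeasurableEquiv.piCongrLeft, Equiv.piCongrLeft]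
    simp only [mem_preimage, mem_setOf_eq]
    rw [show (∑ j : ι, (MeasurableEquiv.piCongrLeft (fun _ : ι => ℝ) e) x j) = ∑ j : ι, x (e.symm j) from Finset.sum_congr rfl (fun j _ => happ j)]
    rw [Equiv.sum_comp e.symm x]
    constructor
    · rintro ⟨h1, h2⟩
      exact ⟨fun i => by simpa [happ, Equiv.symm_apply_apply] using h1 (e i), h2⟩
    · rintro ⟨h1, h2⟩
      exact ⟨fun j => by rw [happ]; exact h1 _, h2⟩
  have hms : MeasurableSet {x : ι → ℝ | (∀ i, 0 ≤ x i) ∧ ∑ i, x i ≤ 1} := by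
    apply MeasurableSet.inter
    · show MeasurableSet {x : ι → ℝ | ∀ i, 0 ≤ x i}
      rw [show {x : ι → ℝ | ∀ i, 0 ≤ x i} = ⋂ i, {x | 0 ≤ x i} from by ext x; simp]
      exact MeasurableSet.iInter fun i =>
        measurableSet_le measurable_const (measurable_pi_apply i)
    · exact measurableSet_le (Finset.measurable_sum _ fun i _ => measurable_pi_apply i)
        measurable_const
  calc volume {x : ι → ℝ | (∀ i, 0 ≤ x i) ∧ ∑ i, x i ≤ 1}
      = volume ((MeasurableEquiv.piCongrLeft (fun _ : ι => ℝ) e) ⁻¹'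
        {x : ι → ℝ | (∀ i, 0 ≤ x i) ∧ ∑ i, x i ≤ 1}) :=
        (mp.measure_preimage hms.nullMeasurableSet).symm
    _ = ENNReal.ofReal (1 ^ d / d.factorial) := by rw [hpre]; exact vol_corner d 1 zero_le_one
    _ = ENNReal.ofReal (1 / d.factorial) := by rw [one_pow]


theorem charsum {n : ℕ} (u : Fin n → ZMod 2) (hu : u ≠ 0) :
    ∑ g : Fin n → ZMod 2, (if ∑ i, u i * g i = 0 then (1:ℝ) else -1) = 0 := by
  classical
  obtain ⟨i0, hi0⟩ : ∃ i, u i ≠ 0 := by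
    by_contra h
    push_neg at h
    exact hu (funext fun i => h i)
  have hu1 : u i0 = 1 := by
    have : ∀ a : ZMod 2, a = 0 ∨ a = 1 := by decide
    rcases this (u i0) with h | h
    · exact absurd h hi0
    · exact h
  set t : Fin n → ZMod 2 := Pi.single i0 1 with ht
  have htd : ∑ i, u i * t i = 1 := by
    rw [ht]
    rw [Finset.sum_eq_single i0]
    · simp [hu1]
    · intro b _ hb; simp [Pi.single_eq_of_ne hb]
    · simp
  have hflip : ∀ g : Fin n → ZMod 2,
      (if ∑ i, u i * (g + t) i = 0 then (1:ℝ) else -1)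
        = -(if ∑ i, u i * g i = 0 then (1:ℝ) else -1) := by
    intro g
    have hsum : ∑ i, u i * (g + t) i = (∑ i, u i * g i) + 1 := by
      simp only [Pi.add_apply, mul_add, Finset.sum_add_distrib, htd]
    rw [hsum]
    have : ∀ a : ZMod 2, (a + 1 = 0 ↔ ¬ (a = 0)) := by decide
    by_cases h : ∑ i, u i * g i = 0
    · rw [if_pos h, if_neg (by rw [this]; simp [h])]
    · rw [if_neg h, if_pos ((this _).2 h)]
      norm_num
  have := Fintype.sum_equiv (Equiv.addRight t)
    (fun g => (if ∑ i, u i * (g + t) i = 0 then (1:ℝ) else -1))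
    (fun g => (if ∑ i, u i * g i = 0 then (1:ℝ) else -1)) (fun g => by simp [Equiv.addRight])
  simp_rw [hflip] at this
  rw [Finset.sum_neg_distrib] at this
  linarith [this]


theorem ifchar_mul (a b : ZMod 2) :
    (if a = 0 then (1:ℝ) else -1) * (if b = 0 then (1:ℝ) else -1)
      = if a + b = 0 then (1:ℝ) else -1 := by
  have h : ∀ a : ZMod 2, a = 0 ∨ a = 1 := by decide
  rcases h a with rfl | rfl <;> rcases h b with rfl | rfl <;>
    simp [show (1 + 1 : ZMod 2) = 0 from rfl, show (1 : ZMod 2) ≠ 0 from by decide]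


theorem vol_exp_image {ι : Type*} [Fintype ι] [DecidableEq ι] (M : Matrix ι ι ℝ)
    (N : ℝ) (hN : 0 < N) (hdet : M.det ≠ 0) (hcol : ∀ g, ∑ s, M s g = -N) :
    volume ((fun x (s : ι) => Real.exp (M.mulVec x s)) '' {x | ∀ g, 0 ≤ x g})
      = ENNReal.ofReal |M.det| * ENNReal.ofReal ((1/N) ^ Fintype.card ι) := by
  classical
  set Ω : Set (ι → ℝ) := {x | ∀ g, 0 ≤ x g} with hΩ
  have hΩm : MeasurableSet Ω := by
    rw [show Ω = ⋂ i, {x : ι → ℝ | 0 ≤ x i} from by ext x; simp [hΩ]]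
    exact MeasurableSet.iInter fun i =>
      measurableSet_le measurable_const (measurable_pi_apply i)
  set f : (ι → ℝ) → (ι → ℝ) := fun x s => Real.exp (M.mulVec x s) with hf
  set f' : (ι → ℝ) → ((ι → ℝ) →L[ℝ] (ι → ℝ)) := fun x =>
    (Matrix.toLin' ((Matrix.diagonal fun s => Real.exp (M.mulVec x s)) * M)).toContinuousLinearMap
    with hf'def
  have hf' : ∀ x, HasFDerivAt f (f' x) x := by
    intro x
    apply hasFDerivAt_pi''
    intro s
    set L : (ι → ℝ) →L[ℝ] ℝ := (ContinuousLinearMap.proj s).comp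
      (LinearMap.toContinuousLinearMap (Matrix.toLin' M)) with hL
    have hbase : HasFDerivAt (fun y => M.mulVec y s) L x := by
      have := L.hasFDerivAt (x := x)
      apply this.congr_of_eventuallyEq
      filter_upwards with y
      simp [hL, Matrix.toLin'_apply]
    have hexp := hbase.exp
    have heq : (Real.exp (M.mulVec x s)) • L = (ContinuousLinearMap.proj s).comp (f' x) := by
      ext y
      simp only [ContinuousLinearMap.smul_apply, ContinuousLinearMap.coe_comp',
        Function.comp_apply, ContinuousLinearMap.proj_apply, hL, hf'def,
        LinearMap.coe_toContinuousLinearMap', Matrix.toLin'_apply]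
      rw [← Matrix.mulVec_mulVec, Matrix.mulVec_diagonal, smul_eq_mul]
    rw [heq] at hexp
    exact hexp
  have hdet' : ∀ x, (f' x).det = Real.exp (-N * ∑ g, x g) * M.det := by
    intro x
    have h1 : (f' x).det = ((Matrix.diagonal fun s => Real.exp (M.mulVec x s)) * M).det := by
      rw [hf'def]
      rw [ContinuousLinearMap.det]
      simp only [ContinuousLinearMap.coe_coe, LinearMap.coe_toContinuousLinearMap]
      exact LinearMap.det_toLin' _
    rw [h1, Matrix.det_mul, Matrix.det_diagonal]
    congr 1
    rw [← Real.exp_sum]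
    congr 1
    have : ∀ s, M.mulVec x s = ∑ g, M s g * x g := fun s => rfl
    simp_rw [this]
    rw [Finset.sum_comm]
    rw [Finset.mul_sum]
    apply Finset.sum_congr rfl
    intro g _
    rw [← Finset.sum_mul, hcol, neg_mul]
  have hinj : Set.InjOn f Ω := by
    intro a _ b _ hab
    have h1 : M.mulVec a = M.mulVec b := by
      funext s
      have := congrFun hab s
      exact Real.exp_injective this
    have : Function.Injective M.mulVec :=
      Matrix.mulVec_injective_iff_isUnit.2
        ((Matrix.isUnit_iff_isUnit_det M).2 (isUnit_iff_ne_zero.2 hdet))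
    exact this h1
  have key := lintegral_abs_det_fderiv_eq_addHaar_image volume hΩm
    (fun x _ => (hf' x).hasFDerivWithinAt) hinj
  rw [← key]
  have habs : ∀ x : ι → ℝ, |(f' x).det| = Real.exp (-N * ∑ g, x g) * |M.det| := by
    intro x
    rw [hdet', abs_mul, Real.abs_exp]
  simp_rw [habs]
  have hsplit : ∀ x : ι → ℝ, ENNReal.ofReal (Real.exp (-N * ∑ g, x g) * |M.det|)
      = ENNReal.ofReal (Real.exp (-N * ∑ g, x g)) * ENNReal.ofReal |M.det| := fun x =>
    ENNReal.ofReal_mul (Real.exp_nonneg _)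
  simp_rw [hsplit]
  rw [lintegral_mul_const'' _ (by
    apply AEMeasurable.ennreal_ofReal
    apply Measurable.aemeasurable
    apply Measurable.exp
    exact (measurable_const.mul (Finset.measurable_sum _ fun i _ => measurable_pi_apply i)))]
  rw [mul_comm]
  congr 1
  -- ∫⁻ x in Ω, ofReal (exp (-N * ∑ x)) = ofReal ((1/N) ^ card ι)
  set h1 : ℝ → ℝ := Set.indicator (Ici (0:ℝ)) (fun t => Real.exp (-(N * t))) with hh1
  have hFeq : Ω.indicator (fun x : ι → ℝ => ENNReal.ofReal (Real.exp (-N * ∑ g, x g)))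
      = fun x => ENNReal.ofReal (∏ g, h1 (x g)) := by
    funext x
    by_cases hx : x ∈ Ω
    · rw [Set.indicator_of_mem hx]
      have : ∀ g, h1 (x g) = Real.exp (-(N * x g)) := fun g =>
        Set.indicator_of_mem (hx g) _
      simp_rw [this, ← Real.exp_sum]
      congr 2
      rw [neg_mul, Finset.mul_sum, ← Finset.sum_neg_distrib]
    · rw [Set.indicator_of_notMem hx]
      obtain ⟨g, hg⟩ : ∃ g, ¬ (0 ≤ x g) := by
        by_contra h; push_neg at h; exact hx h
      have : h1 (x g) = 0 := Set.indicator_of_notMem (by simpa using hg) _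
      rw [Finset.prod_eq_zero (Finset.mem_univ g) this]
      simp
  rw [← lintegral_indicator hΩm, hFeq]
  have hint1 : Integrable h1 := by
    rw [hh1]
    apply (IntegrableOn.integrable_indicator · measurableSet_Ici)
    rw [integrableOn_Ici_iff_integrableOn_Ioi]
    have := exp_neg_integrableOn_Ioi 0 hN
    simpa [neg_mul] using this
  have hint : Integrable (fun x : ι → ℝ => ∏ g, h1 (x g)) := Integrable.fintype_prod fun _ => hint1
  have hnn : 0 ≤ᵐ[volume] (fun x : ι → ℝ => ∏ g, h1 (x g)) := by
    filter_upwards with x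
    apply Finset.prod_nonneg
    intro g _
    rw [hh1]
    apply Set.indicator_nonneg
    intro t _
    exact Real.exp_nonneg _
  rw [← ofReal_integral_eq_lintegral_ofReal hint hnn]
  congr 1
  rw [volume_pi, MeasureTheory.integral_fintype_prod_eq_prod (f := fun _ : ι => h1)]
  rw [Finset.prod_const]
  congr 1
  rw [hh1, MeasureTheory.integral_indicator measurableSet_Ici,
    MeasureTheory.integral_Ici_eq_integral_Ioi]
  have := MeasureTheory.integral_comp_mul_left_Ioi (fun u => Real.exp (-u)) 0 hN
  simp only [mul_zero] at this
  rw [this, integral_exp_neg_Ioi]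
  simp


theorem convexHull_corner {ι : Type*} [Fintype ι] [DecidableEq ι] :
    convexHull ℝ (insert (0 : ι → ℝ) (Set.range fun i => Pi.single i (1:ℝ)))
      = {x : ι → ℝ | (∀ i, 0 ≤ x i) ∧ ∑ i, x i ≤ 1} := by
  apply Subset.antisymm
  · apply convexHull_min
    · rintro y (rfl | ⟨i, rfl⟩)
      · exact ⟨fun i => le_refl 0, by simp⟩
      · constructor
        · intro j
          rcases eq_or_ne i j with rfl | h
          · simp
          · simp [Pi.single_eq_of_ne' h]
        · rw [Finset.sum_eq_single i (fun b _ hb => Pi.single_eq_of_ne' hb.symm 1) (by simp)]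
          simp
    · rintro x ⟨hx0, hx1⟩ y ⟨hy0, hy1⟩ a b ha hb hab
      constructor
      · intro i
        have := hx0 i; have := hy0 i
        simp only [Pi.add_apply, Pi.smul_apply, smul_eq_mul]
        nlinarith
      · simp only [Pi.add_apply, Pi.smul_apply, smul_eq_mul]
        rw [Finset.sum_add_distrib, ← Finset.mul_sum, ← Finset.mul_sum]
        nlinarith
  · rintro x ⟨hx0, hx1⟩
    classical
    set w : Option ι → ℝ := fun o => Option.elim o (1 - ∑ i, x i) (fun i => x i) with hw
    set z : Option ι → (ι → ℝ) := fun o => Option.elim o 0 (fun i => Pi.single i 1) with hz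
    have hwsum : ∑ o : Option ι, w o = 1 := by
      rw [Fintype.sum_option]
      simp [hw]
    have hmem := Finset.centerMass_mem_convexHull (t := (Finset.univ : Finset (Option ι)))
      (w := w) (z := z)
      (fun o _ => by
        rcases o with _ | i
        · simpa [hw] using sub_nonneg.2 hx1
        · exact hx0 i)
      (by rw [hwsum]; norm_num)
      (fun o _ => by
        rcases o with _ | i
        · exact mem_insert _ _
        · exact mem_insert_of_mem _ ⟨i, rfl⟩ :
        ∀ o ∈ (Finset.univ : Finset (Option ι)), z o ∈
          insert (0 : ι → ℝ) (Set.range fun i => Pi.single i (1:ℝ)))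
    have hcm : Finset.univ.centerMass w z = x := by
      rw [Finset.centerMass_eq_of_sum_1 _ _ hwsum]
      funext j
      rw [Fintype.sum_option]
      simp only [hz, hw, Option.elim, Pi.add_apply, Pi.smul_apply, smul_eq_mul,
        Pi.zero_apply, mul_zero, zero_add, Finset.sum_apply]
      rw [Finset.sum_eq_single j (fun i _ hij => by simp [Pi.single_eq_of_ne' hij]) (by simp)]
      simp
    rwa [hcm] at hmem


theorem vol_translate {ι : Type*} [Fintype ι] (v0 : ι → ℝ) (X : Set (ι → ℝ)) :
    volume ((fun y => v0 + y) '' X) = volume X := by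
  have : (fun y : ι → ℝ => v0 + y) '' X = (fun y : ι → ℝ => -v0 + y) ⁻¹' X := by
    ext y
    constructor
    · rintro ⟨x, hx, rfl⟩; simpa using hx
    · intro hy; exact ⟨-v0 + y, hy, by show v0 + (-v0 + y) = y; rw [add_neg_cancel_left]⟩
  rw [this]
  exact measure_preimage_add volume (-v0) X


theorem det_sq_of_gram {ι : Type*} [Fintype ι] [DecidableEq ι] (M : Matrix ι ι ℝ) (N : ℝ)
    (h : M * M.transpose = N • (1 + Matrix.of (fun _ _ : ι => (1:ℝ))))
    (hcard : (Fintype.card ι : ℝ) + 1 = N) :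
    M.det ^ 2 = N ^ (Fintype.card ι + 1) := by
  have hJ : Matrix.of (fun _ _ : ι => (1:ℝ))
      = Matrix.replicateCol Unit (fun _ => (1:ℝ)) * Matrix.replicateRow Unit (fun _ => (1:ℝ)) := by
    ext i j
    simp [Matrix.mul_apply]
  calc M.det ^ 2 = (M * M.transpose).det := by rw [Matrix.det_mul, Matrix.det_transpose, sq]
    _ = N ^ Fintype.card ι * (1 + Matrix.of (fun _ _ : ι => (1:ℝ))).det := by
        rw [h, Matrix.det_smul]
    _ = N ^ Fintype.card ι * (1 + dotProduct (fun _ : ι => (1:ℝ)) (fun _ => (1:ℝ))) := by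
        rw [hJ, Matrix.det_one_add_replicateCol_mul_replicateRow]
    _ = N ^ Fintype.card ι * N := by
        congr 1
        rw [← hcard]
        simp [dotProduct, add_comm]
    _ = N ^ (Fintype.card ι + 1) := by rw [pow_succ]


/-- For the group `(Z₂)ⁿ` with characters `χ_s(g) = (−1)^{∑ sᵢgᵢ}`, the set `S` of
accessible weight vectors (indexed by nontrivial characters) and the group polytope `P` satisfy
`2^{n·2ⁿ} · vol(S) = (2ⁿ)! · vol(P)`: the accessibility volume ratio is `(2ⁿ)!/2^{n·2ⁿ}`. -/
theorem accessibility_volume_ratio_Z2_pow_n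
    (n : ℕ) (hn : 1 ≤ n)
    (χ : (Fin n → ZMod 2) → (Fin n → ZMod 2) → ℝ)
    (hχ : ∀ s g : Fin n → ZMod 2, χ s g = if ∑ i : Fin n, s i * g i = 0 then 1 else -1)
    (S : Set ({s : Fin n → ZMod 2 // s ≠ 0} → ℝ))
    (hS : S = {y : {s : Fin n → ZMod 2 // s ≠ 0} → ℝ |
      ∃ x : {g : Fin n → ZMod 2 // g ≠ 0} → ℝ, (∀ g, 0 ≤ x g) ∧
        ∀ s : {s : Fin n → ZMod 2 // s ≠ 0},
          y s = Real.exp (∑ g : {g : Fin n → ZMod 2 // g ≠ 0}, x g * (χ (s : Fin n → ZMod 2) (g : Fin n → ZMod 2) - 1))})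
    (P : Set ({s : Fin n → ZMod 2 // s ≠ 0} → ℝ))
    (hP : P = convexHull ℝ
      (Set.range fun g : Fin n → ZMod 2 =>
        fun s : {s : Fin n → ZMod 2 // s ≠ 0} => χ (s : Fin n → ZMod 2) g)) :
    (2 : ENNReal) ^ (n * 2 ^ n) * volume S = (Nat.factorial (2 ^ n) : ENNReal) * volume P := by
  classical
  have haux : ∀ a : ZMod 2, a = 0 ∨ a = 1 := by decide
  have hself : ∀ v : Fin n → ZMod 2, v + v = 0 := by
    intro v; funext i
    rcases haux (v i) with h | h <;> simp [h] <;> rfl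
  have hadd_eq : ∀ v w : Fin n → ZMod 2, v + w = 0 → v = w := by
    intro v w h
    have : v + (w + w) = (v + w) + w := by rw [add_assoc]
    rw [hself w, h, zero_add, add_zero] at this
    exact this
  have hχ00 : ∀ s, χ s 0 = 1 := by intro s; rw [hχ]; simp
  have hχ0g : ∀ g, χ 0 g = 1 := by intro g; rw [hχ]; simp
  have hχsq : ∀ s g, χ s g * χ s g = 1 := by
    intro s g; rw [hχ]; split <;> norm_num
  have hχmul : ∀ s t g, χ s g * χ t g = χ (s + t) g := by
    intro s t g
    rw [hχ, hχ, hχ]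
    have hadd : ∑ i, (s + t) i * g i = (∑ i, s i * g i) + ∑ i, t i * g i := by
      rw [← Finset.sum_add_distrib]
      exact Finset.sum_congr rfl fun i _ => by simp [add_mul]
    rw [hadd, ← ifchar_mul]
  have hsum2 : ∀ u : Fin n → ZMod 2, u ≠ 0 → ∑ g, χ u g = 0 := by
    intro u hu
    rw [show (∑ g, χ u g) = ∑ g, (if ∑ i, u i * g i = 0 then (1:ℝ) else -1) from
      Finset.sum_congr rfl fun g _ => hχ u g]
    exact charsum u hu
  have hsum1 : ∀ g : Fin n → ZMod 2, g ≠ 0 → ∑ s, χ s g = 0 := by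
    intro g hg
    rw [show (∑ s, χ s g) = ∑ s, (if ∑ i, g i * s i = 0 then (1:ℝ) else -1) from
      Finset.sum_congr rfl fun s _ => by
        rw [hχ, show (∑ i, s i * g i) = ∑ i, g i * s i from
          Finset.sum_congr rfl fun i _ => mul_comm _ _]]
    exact charsum g hg
  have hsub : ∀ f : (Fin n → ZMod 2) → ℝ,
      ∑ s : {s : Fin n → ZMod 2 // s ≠ 0}, f s.1 = (∑ s, f s) - f 0 := by
    intro f
    have h1 : ∑ s ∈ Finset.univ.erase 0, f s = ∑ s : {s : Fin n → ZMod 2 // s ≠ 0}, f s.1 :=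
      Finset.sum_subtype _ (by simp [Finset.mem_erase]) f
    have h2 := Finset.sum_erase_add Finset.univ f (Finset.mem_univ 0)
    linarith
  have hcardG : Fintype.card (Fin n → ZMod 2) = 2 ^ n := by simp
  have hcardI : Fintype.card {s : Fin n → ZMod 2 // s ≠ 0} = 2 ^ n - 1 := by
    have := Fintype.card_subtype_compl (fun s : Fin n → ZMod 2 => s = 0)
    rw [Fintype.card_subtype_eq, hcardG] at this
    exact this
  -- matrix facts
  set M : Matrix {s : Fin n → ZMod 2 // s ≠ 0} {s : Fin n → ZMod 2 // s ≠ 0} ℝ :=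
    Matrix.of (fun s g => χ s.1 g.1 - 1) with hM
  have hone : (1:ℝ) ≤ (2:ℝ)^n := by
    calc (1:ℝ) = 1^n := (one_pow n).symm
    _ ≤ 2^n := pow_le_pow_left₀ (by norm_num) (by norm_num) n
  have hcastI : ((Fintype.card {s : Fin n → ZMod 2 // s ≠ 0} : ℕ) : ℝ) = (2:ℝ)^n - 1 := by
    rw [hcardI]
    push_cast [Nat.cast_sub (Nat.one_le_two_pow)]
    ring
  have hsubI : ∀ u : Fin n → ZMod 2, u ≠ 0 →
      ∑ s : {s : Fin n → ZMod 2 // s ≠ 0}, χ s.1 u = -1 := by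
    intro u hu
    rw [hsub (fun s => χ s u), hsum1 u hu, hχ0g]
    norm_num
  have hsubI2 : ∀ u : Fin n → ZMod 2, u ≠ 0 →
      ∑ g : {s : Fin n → ZMod 2 // s ≠ 0}, χ u g.1 = -1 := by
    intro u hu
    rw [hsub (fun g => χ u g), hsum2 u hu, hχ00]
    norm_num
  have hcol : ∀ g : {s : Fin n → ZMod 2 // s ≠ 0}, ∑ s, M s g = -((2:ℝ)^n) := by
    intro g
    have h0 : ∑ s : {s : Fin n → ZMod 2 // s ≠ 0}, M s g
        = ∑ s : {s : Fin n → ZMod 2 // s ≠ 0}, (χ s.1 g.1 - 1) := rfl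
    rw [h0, Finset.sum_sub_distrib, hsubI g.1 g.2]
    simp only [Finset.sum_const, Finset.card_univ, nsmul_eq_mul, mul_one]
    rw [hcastI]
    ring
  have horth : ∀ s t : Fin n → ZMod 2, ∑ g, χ s g * χ t g
      = if s = t then (2:ℝ)^n else 0 := by
    intro s t
    by_cases hst : s = t
    · subst hst
      rw [if_pos rfl]
      rw [show (∑ g, χ s g * χ s g) = ∑ g : Fin n → ZMod 2, (1:ℝ) from
        Finset.sum_congr rfl fun g _ => hχsq s g]
      simp [hcardG]
    · rw [if_neg hst]
      rw [show (∑ g, χ s g * χ t g) = ∑ g, χ (s + t) g from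
        Finset.sum_congr rfl fun g _ => hχmul s t g]
      apply hsum2
      intro h
      exact hst (hadd_eq s t h)
  have hgram : M * M.transpose
      = ((2:ℝ)^n) • (1 + Matrix.of (fun _ _ : {s : Fin n → ZMod 2 // s ≠ 0} => (1:ℝ))) := by
    ext s t
    rw [Matrix.mul_apply]
    have hterm : ∀ g : {s : Fin n → ZMod 2 // s ≠ 0},
        M s g * M.transpose g t
          = χ s.1 g.1 * χ t.1 g.1 - χ s.1 g.1 - χ t.1 g.1 + 1 := by
      intro g
      rw [Matrix.transpose_apply]
      simp only [hM, Matrix.of_apply]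
      ring
    rw [Finset.sum_congr rfl fun g _ => hterm g]
    have e1 : ∑ g : {s : Fin n → ZMod 2 // s ≠ 0}, χ s.1 g.1 * χ t.1 g.1
        = (if s.1 = t.1 then (2:ℝ)^n else 0) - 1 := by
      rw [hsub (fun g => χ s.1 g * χ t.1 g), horth s.1 t.1, hχ00, hχ00, mul_one]
    simp only [Finset.sum_add_distrib, Finset.sum_sub_distrib]
    rw [e1, hsubI2 s.1 s.2, hsubI2 t.1 t.2]
    simp only [Finset.sum_const, Finset.card_univ, nsmul_eq_mul, mul_one]
    rw [hcastI]
    simp only [Matrix.smul_apply, Matrix.add_apply, Matrix.one_apply, Matrix.of_apply,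
      smul_eq_mul]
    by_cases h : s = t
    · rw [if_pos (congrArg Subtype.val h), if_pos h]; ring
    · rw [if_neg (fun hh => h (Subtype.ext hh)), if_neg h]; ring
  have hdetsq : M.det ^ 2 = ((2:ℝ)^n) ^ (Fintype.card {s : Fin n → ZMod 2 // s ≠ 0} + 1) :=
    det_sq_of_gram M ((2:ℝ)^n) hgram (by rw [hcastI]; ring)
  have hdet0 : M.det ≠ 0 := by
    intro h
    rw [h] at hdetsq
    have : (0:ℝ) < ((2:ℝ)^n) ^ (Fintype.card {s : Fin n → ZMod 2 // s ≠ 0} + 1) := by positivity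
    simp only [ne_eq, zero_pow, OfNat.ofNat_ne_zero, not_false_eq_true] at hdetsq
    rw [← hdetsq] at this
    exact lt_irrefl 0 this
  -- volume of S
  have hSimg : S = (fun x (s : {s : Fin n → ZMod 2 // s ≠ 0}) => Real.exp (M.mulVec x s))
      '' {x | ∀ g, 0 ≤ x g} := by
    rw [hS]
    ext y
    simp only [mem_setOf_eq, mem_image]
    have hsumeq : ∀ (x : {s : Fin n → ZMod 2 // s ≠ 0} → ℝ) s, M.mulVec x s
        = ∑ g : {s : Fin n → ZMod 2 // s ≠ 0}, x g * (χ s.1 g.1 - 1) := by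
      intro x s
      rw [show M.mulVec x s = ∑ g, M s g * x g from rfl]
      exact Finset.sum_congr rfl fun g _ => mul_comm _ _
    constructor
    · rintro ⟨x, hx0, hxy⟩
      refine ⟨x, hx0, funext fun s => ?_⟩
      show Real.exp (M.mulVec x s) = y s
      rw [hxy s, hsumeq]
    · rintro ⟨x, hx0, rfl⟩
      refine ⟨x, hx0, fun s => ?_⟩
      show (fun x (s : {s : Fin n → ZMod 2 // s ≠ 0}) => Real.exp (M.mulVec x s)) x s
        = Real.exp (∑ g : {s : Fin n → ZMod 2 // s ≠ 0}, x g * (χ s.1 g.1 - 1))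
      show Real.exp (M.mulVec x s)
        = Real.exp (∑ g : {s : Fin n → ZMod 2 // s ≠ 0}, x g * (χ s.1 g.1 - 1))
      rw [hsumeq]
  have hvolS : volume S
      = ENNReal.ofReal |M.det| * ENNReal.ofReal ((1/(2:ℝ)^n) ^ (2^n - 1)) := by
    rw [hSimg, vol_exp_image M ((2:ℝ)^n) (by positivity) hdet0 hcol, hcardI]
  -- volume of P
  set v0 : {s : Fin n → ZMod 2 // s ≠ 0} → ℝ := fun _ => 1 with hv0
  set T := ((AffineEquiv.constVAdd ℝ ({s : Fin n → ZMod 2 // s ≠ 0} → ℝ) v0).toAffineMap).comp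
    (Matrix.toLin' M).toAffineMap with hT
  have hTapp : ∀ x, T x = v0 + Matrix.toLin' M x := fun x => rfl
  have hmvs : ∀ (j : {s : Fin n → ZMod 2 // s ≠ 0}) s,
      M.mulVec (Pi.single j 1) s = M s j := by
    intro j s
    rw [Matrix.mulVec_single_one]
    rfl
  have hrange : (Set.range fun g : Fin n → ZMod 2 =>
        fun s : {s : Fin n → ZMod 2 // s ≠ 0} => χ s.1 g)
      = T '' (insert (0 : {s : Fin n → ZMod 2 // s ≠ 0} → ℝ)
          (Set.range fun i : {s : Fin n → ZMod 2 // s ≠ 0} => Pi.single i (1:ℝ))) := by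
    ext y
    constructor
    · rintro ⟨g, rfl⟩
      by_cases hg : g = 0
      · subst hg
        refine ⟨0, mem_insert _ _, ?_⟩
        rw [hTapp]
        funext s
        simp [hχ00 s.1, hv0]
      · refine ⟨Pi.single ⟨g, hg⟩ 1, mem_insert_of_mem _ ⟨⟨g, hg⟩, rfl⟩, ?_⟩
        rw [hTapp]
        funext s
        simp only [Pi.add_apply, Matrix.toLin'_apply, hmvs, hv0]
        show (1:ℝ) + (χ s.1 g - 1) = χ s.1 g
        ring
    · rintro ⟨x, hx, rfl⟩
      rcases hx with rfl | ⟨i, rfl⟩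
      · refine ⟨0, ?_⟩
        rw [hTapp]
        funext s
        simp [hχ00 s.1, hv0]
      · refine ⟨i.1, ?_⟩
        rw [hTapp]
        funext s
        simp only [Pi.add_apply, Matrix.toLin'_apply, hmvs, hv0]
        show χ s.1 i.1 = (1:ℝ) + (χ s.1 i.1 - 1)
        ring
  have hP2 : P = T '' {x | (∀ i, 0 ≤ x i) ∧ ∑ i, x i ≤ 1} := by
    rw [hP, hrange, ← AffineMap.image_convexHull, convexHull_corner]
  have hvolP : volume P
      = ENNReal.ofReal |M.det| * ENNReal.ofReal (1 / ((2^n - 1).factorial : ℝ)) := by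
    rw [hP2]
    have himg : T '' {x | (∀ i, 0 ≤ x i) ∧ ∑ i, x i ≤ 1}
        = (fun y => v0 + y) '' ((Matrix.toLin' M) ''
            {x | (∀ i, 0 ≤ x i) ∧ ∑ i, x i ≤ 1}) := by
      rw [Set.image_image]
      rfl
    rw [himg, vol_translate, Measure.addHaar_image_linearMap, LinearMap.det_toLin',
      vol_corner', hcardI]
  -- final arithmetic
  rw [hvolS, hvolP]
  set m : ℕ := 2^n - 1 with hm
  have h2n : 2^n = m + 1 := by
    have := Nat.one_le_two_pow (n := n)
    rw [hm]
    omega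
  have hfact : ((2^n).factorial : ENNReal) = ENNReal.ofReal ((2^n).factorial : ℝ) := by
    rw [ENNReal.ofReal_natCast]
  have h2pow : (2 : ENNReal) ^ (n * 2^n) = ENNReal.ofReal ((2:ℝ) ^ (n * 2^n)) := by
    rw [ENNReal.ofReal_pow (by norm_num)]
    norm_num
  rw [hfact, h2pow]
  rw [← ENNReal.ofReal_mul (by positivity), ← ENNReal.ofReal_mul (by positivity),
    ← ENNReal.ofReal_mul (by positivity), ← ENNReal.ofReal_mul (by positivity)]
  congr 1
  have hmf : (0:ℝ) < (m.factorial : ℝ) := by positivity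
  have hcast2 : ((m:ℝ) + 1) = (2:ℝ)^n := by
    have : ((2^n : ℕ) : ℝ) = (2:ℝ)^n := by push_cast; ring
    rw [← this, h2n]
    push_cast
    ring
  rw [h2n, Nat.factorial_succ]
  push_cast
  rw [show n * (m+1) = n * m + n from by ring, pow_add, ← hcast2]
  rw [div_pow, one_pow, pow_mul]
  rw [← hcast2]
  field_simp
end

section
/- Let G be a finite group with left regular representation R : G → Matrix G G ℝ, let q : G → ℝ with q(h) ≥ 0 for all h, and let t > 0. Write Matrix.exp(t • (∑_{h∈G} q(h) • R(h) − 1)) = ∑_{μ∈G} w_μ • R(μ), where (uniquely) w_μ = (1/|G|)·Tr((R μ)ᵀ · Matrix.exp(t • (∑_{h∈G} q(h) • R(h) − 1))). Then for every μ ∈ G: w_μ > 0 if and only if μ belongs to the subgroup Subgroup.closure {h ∈ G : q(h) ≠ 0} generated by the support of q. In particular, the accessible map at any time t > 0 is a mixture, with strictly positive weights, of exactly the elements of the smallest subgroup containing all channels appearing in the Lindblad generator. -/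
open Matrix

open scoped Nat


open scoped Nat

section Aux
variable {G : Type*} [Group G] [Fintype G] [DecidableEq G]

def Amat (q : G → ℝ) : Matrix G G ℝ := Matrix.of fun a b => q (a * b⁻¹)

lemma Amat_apply (q : G → ℝ) (a b : G) : Amat q a b = q (a * b⁻¹) := rfl

lemma Amat_pow_transl (q : G → ℝ) : ∀ (n : ℕ) (g a b : G),
    ((Amat q) ^ n) (a * g) (b * g) = ((Amat q) ^ n) a b := by
  intro n
  induction n with
  | zero => intro g a b; simp [Matrix.one_apply]
  | succ n ih =>
    intro g a b
    rw [pow_succ']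
    simp only [Matrix.mul_apply]
    refine (Fintype.sum_equiv (Equiv.mulRight g) _ _ fun c => ?_).symm
    simp only [Equiv.coe_mulRight]
    rw [ih g, Amat_apply, Amat_apply, show a * g * (c * g)⁻¹ = a * c⁻¹ by group]

lemma Amat_pow_nonneg (q : G → ℝ) (hq : ∀ h, 0 ≤ q h) :
    ∀ (n : ℕ) (a b : G), 0 ≤ ((Amat q) ^ n) a b := by
  intro n
  induction n with
  | zero => intro a b; rw [pow_zero, Matrix.one_apply]; split <;> norm_num
  | succ n ih =>
    intro a b
    rw [pow_succ', Matrix.mul_apply]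
    exact Finset.sum_nonneg fun c _ => mul_nonneg (hq _) (ih c b)

lemma mem_of_ne_zero (q : G → ℝ) :
    ∀ (n : ℕ) (μ : G), ((Amat q) ^ n) μ 1 ≠ 0 → μ ∈ Subgroup.closure {h : G | q h ≠ 0} := by
  intro n
  induction n with
  | zero =>
    intro μ h
    rw [pow_zero, Matrix.one_apply] at h
    have : μ = 1 := by by_contra hne; simp [hne] at h
    rw [this]; exact one_mem _
  | succ n ih =>
    intro μ h
    rw [pow_succ', Matrix.mul_apply] at h
    obtain ⟨c, -, hc⟩ := Finset.exists_ne_zero_of_sum_ne_zero h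
    have h1 : q (μ * c⁻¹) ≠ 0 := fun h0 => hc (by rw [Amat_apply, h0, zero_mul])
    have h2 : ((Amat q) ^ n) c 1 ≠ 0 := fun h0 => hc (by rw [h0, mul_zero])
    have := Subgroup.mul_mem _ (Subgroup.subset_closure (k := {h : G | q h ≠ 0}) h1) (ih c h2)
    simpa using this

lemma exists_pow_pos (q : G → ℝ) (hq : ∀ h, 0 ≤ q h) (μ : G)
    (hμ : μ ∈ Subgroup.closure {h : G | q h ≠ 0}) :
    ∃ n : ℕ, 0 < ((Amat q) ^ n) μ 1 := by
  have hmul : ∀ x y : G, (∃ n, 0 < ((Amat q) ^ n) x 1) → (∃ m, 0 < ((Amat q) ^ m) y 1) →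
      ∃ k, 0 < ((Amat q) ^ k) (x * y) 1 := by
    rintro x y ⟨n, hn⟩ ⟨m, hm⟩
    refine ⟨n + m, ?_⟩
    rw [pow_add, Matrix.mul_apply]
    refine Finset.sum_pos' (fun c _ => mul_nonneg (Amat_pow_nonneg q hq n _ _)
      (Amat_pow_nonneg q hq m _ _)) ⟨y, Finset.mem_univ y, ?_⟩
    have : ((Amat q) ^ n) (x * y) y = ((Amat q) ^ n) x 1 := by
      have := Amat_pow_transl q n y x 1
      simpa using this
    rw [this]
    exact mul_pos hn hm
  refine Subgroup.closure_induction ?_ ?_ ?_ ?_ hμ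
  · intro x hx
    refine ⟨1, ?_⟩
    rw [pow_one, Amat_apply]
    simpa using lt_of_le_of_ne (hq _) (Ne.symm (by simpa using hx))
  · exact ⟨0, by simp [Matrix.one_apply]⟩
  · intro x y _ _ hx hy; exact hmul x y hx hy
  · intro x _ hx
    have hpow : ∀ k : ℕ, ∃ m, 0 < ((Amat q) ^ m) (x ^ k) 1 := by
      intro k
      induction k with
      | zero => exact ⟨0, by simp [Matrix.one_apply]⟩
      | succ k ihk => simpa [pow_succ] using hmul _ _ ihk hx
    have hxinv : x⁻¹ = x ^ (orderOf x - 1) := by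
      refine inv_eq_of_mul_eq_one_right ?_
      rw [← pow_succ', Nat.sub_add_cancel (orderOf_pos x), pow_orderOf_eq_one]
    rw [hxinv]; exact hpow _

end Aux

section ExpPart
variable {G : Type*} [Group G] [Fintype G] [DecidableEq G]

lemma summable_matrix_exp (q : G → ℝ) (t : ℝ) :
    Summable fun n : ℕ => ((n ! : ℝ)⁻¹) • (t • Amat q) ^ n := by
  letI : SeminormedRing (Matrix G G ℝ) := Matrix.linftyOpSemiNormedRing
  letI : NormedRing (Matrix G G ℝ) := Matrix.linftyOpNormedRing
  letI : NormedAlgebra ℝ (Matrix G G ℝ) := Matrix.linftyOpNormedAlgebra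
  exact NormedSpace.expSeries_summable' _

lemma entry_fun_eq (q : G → ℝ) (t : ℝ) (a b : G) :
    (fun n : ℕ => (((n ! : ℝ)⁻¹) • (t • Amat q) ^ n) a b)
      = fun n : ℕ => (t ^ n / n !) * ((Amat q) ^ n) a b := by
  funext n
  simp only [smul_pow, Matrix.smul_apply, smul_eq_mul]
  ring

lemma summable_entry (q : G → ℝ) (t : ℝ) (a b : G) :
    Summable fun n : ℕ => (t ^ n / n !) * ((Amat q) ^ n) a b := by
  rw [← entry_fun_eq q t a b]
  exact Pi.summable.mp (Pi.summable.mp (summable_matrix_exp q t) a) b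

lemma exp_entry (q : G → ℝ) (t : ℝ) (a b : G) :
    NormedSpace.exp (t • (Amat q - 1)) a b
      = Real.exp (-t) * ∑' n : ℕ, (t ^ n / n !) * ((Amat q) ^ n) a b := by
  have hsplit : t • (Amat q - 1) = (-t) • (1 : Matrix G G ℝ) + t • Amat q := by
    rw [smul_sub]; module
  have hcomm : Commute ((-t) • (1 : Matrix G G ℝ)) (t • Amat q) :=
    (Commute.one_left _).smul_left _
  letI : SeminormedRing (Matrix G G ℝ) := Matrix.linftyOpSemiNormedRing
  letI : NormedRing (Matrix G G ℝ) := Matrix.linftyOpNormedRing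
  letI : NormedAlgebra ℝ (Matrix G G ℝ) := Matrix.linftyOpNormedAlgebra
  letI : NormedAlgebra ℚ (Matrix G G ℝ) := NormedAlgebra.restrictScalars ℚ ℝ (Matrix G G ℝ)
  have h1 : ((-t) • (1 : Matrix G G ℝ)) = algebraMap ℝ (Matrix G G ℝ) (-t) := by
    rw [Algebra.algebraMap_eq_smul_one]
  have h2 : NormedSpace.exp (t • Amat q) a b
      = ∑' n : ℕ, (t ^ n / n !) * ((Amat q) ^ n) a b := by
    rw [NormedSpace.exp_eq_tsum ℝ]
    beta_reduce
    erw [tsum_apply (summable_matrix_exp q t),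
      tsum_apply (Pi.summable.mp (summable_matrix_exp q t) a)]
    exact tsum_congr fun n => congrFun (entry_fun_eq q t a b) n
  have h3 : Real.exp (-t) = NormedSpace.exp (-t) := congrFun Real.exp_eq_exp_ℝ (-t)
  erw [hsplit, NormedSpace.exp_add_of_commute hcomm, h1, ← NormedSpace.algebraMap_exp_comm,
    ← h3, ← Algebra.smul_def, Matrix.smul_apply, smul_eq_mul, h2]

end ExpPart

/-- For the left regular representation of a finite group and `t > 0`, writing
`exp(t•(∑ q h • R h − 1)) = ∑ w μ • R μ` with the (unique) weights given by the trace formula,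
a weight `w μ` is strictly positive iff `μ` lies in the subgroup generated by the support of
`q`: the accessible map is a strictly positive mixture of exactly the elements of the smallest
subgroup containing all channels in the Lindblad generator. -/
theorem accessible_weights_positive_iff_mem_closure_support
    {G : Type*} [Group G] [Fintype G] [DecidableEq G]
    (R : G → Matrix G G ℝ)
    (hR : ∀ g a b : G, R g a b = if a = g * b then 1 else 0)
    (q : G → ℝ) (hq : ∀ h : G, 0 ≤ q h)
    (t : ℝ) (ht : 0 < t)
    (w : G → ℝ)
    (hw : ∀ μ : G, w μ = (1 / (Fintype.card G : ℝ)) *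
      Matrix.trace ((R μ)ᵀ * NormedSpace.exp (t • ((∑ h : G, q h • R h) - 1)))) :
    NormedSpace.exp (t • ((∑ h : G, q h • R h) - 1)) = (∑ μ : G, w μ • R μ) ∧
      ∀ μ : G, (0 < w μ ↔ μ ∈ Subgroup.closure {h : G | q h ≠ 0}) := by
  have : Nonempty G := ⟨1⟩
  have hcard : (Fintype.card G : ℝ) ≠ 0 := Nat.cast_ne_zero.mpr Fintype.card_ne_zero
  have hA : (∑ h : G, q h • R h) = Amat q := by
    ext a b
    rw [Matrix.sum_apply]
    simp only [Matrix.smul_apply, hR, smul_eq_mul, Amat_apply]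
    have hiff : ∀ h : G, (a = h * b) ↔ (h = a * b⁻¹) := by
      intro h
      constructor
      · rintro rfl; group
      · rintro rfl; group
    calc ∑ h : G, q h * (if a = h * b then 1 else 0)
        = ∑ h : G, (if h = a * b⁻¹ then q h else 0) := by
          refine Finset.sum_congr rfl fun h _ => ?_
          by_cases hc : h = a * b⁻¹ <;> simp [hc, hiff h]
      _ = q (a * b⁻¹) := by rw [Finset.sum_ite_eq' Finset.univ (a * b⁻¹) q]; simp
  rw [hA] at hw ⊢
  set M : Matrix G G ℝ := NormedSpace.exp (t • (Amat q - 1)) with hM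
  have hMtrans : ∀ g a b : G, M (a * g) (b * g) = M a b := by
    intro g a b
    rw [hM]
    rw [exp_entry, exp_entry]
    congr 1
    exact tsum_congr fun n => by rw [Amat_pow_transl q n g a b]
  have hwM : ∀ μ : G, w μ = M μ 1 := by
    intro μ
    have htr : Matrix.trace ((R μ)ᵀ * M) = ∑ a : G, M (μ * a) a := by
      rw [Matrix.trace]
      refine Finset.sum_congr rfl fun a _ => ?_
      rw [Matrix.diag_apply, Matrix.mul_apply]
      calc ∑ b : G, (R μ)ᵀ a b * M b a
          = ∑ b : G, (if b = μ * a then M b a else 0) := by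
            refine Finset.sum_congr rfl fun b _ => ?_
            rw [Matrix.transpose_apply, hR]
            by_cases hc : b = μ * a <;> simp [hc]
        _ = M (μ * a) a := by rw [Finset.sum_ite_eq' Finset.univ (μ * a) (fun b => M b a)]; simp
    have hconst : ∀ a : G, M (μ * a) a = M μ 1 := by
      intro a
      have := hMtrans a μ 1
      simpa using this
    rw [hw, htr]
    simp only [hconst]
    rw [Finset.sum_const, Finset.card_univ, nsmul_eq_mul]
    field_simp
  constructor
  · ext a b
    rw [Matrix.sum_apply]
    have : ∑ μ : G, (w μ • R μ) a b = w (a * b⁻¹) := by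
      simp only [Matrix.smul_apply, hR, smul_eq_mul]
      have hiff : ∀ μ : G, (a = μ * b) ↔ (μ = a * b⁻¹) := by
        intro μ; constructor
        · rintro rfl; group
        · rintro rfl; group
      calc ∑ μ : G, w μ * (if a = μ * b then 1 else 0)
          = ∑ μ : G, (if μ = a * b⁻¹ then w μ else 0) := by
            refine Finset.sum_congr rfl fun μ _ => ?_
            by_cases hc : μ = a * b⁻¹ <;> simp [hc, hiff μ]
        _ = w (a * b⁻¹) := by rw [Finset.sum_ite_eq' Finset.univ (a * b⁻¹) w]; simp
    rw [this, hwM]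
    have := hMtrans b (a * b⁻¹) 1
    simpa using this
  · intro μ
    rw [hwM μ, hM, exp_entry]
    have hsum := summable_entry q t μ (1 : G)
    have hnonneg : ∀ n : ℕ, 0 ≤ (t ^ n / n !) * ((Amat q) ^ n) μ 1 := fun n =>
      mul_nonneg (div_nonneg (pow_nonneg ht.le n) (Nat.cast_nonneg _))
        (Amat_pow_nonneg q hq n μ 1)
    constructor
    · intro hpos
      by_contra hmem
      have hzero : ∀ n : ℕ, (t ^ n / n !) * ((Amat q) ^ n) μ 1 = 0 := by
        intro n
        have : ((Amat q) ^ n) μ 1 = 0 := by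
          by_contra hne
          exact hmem (mem_of_ne_zero q n μ hne)
        rw [this, mul_zero]
      rw [tsum_congr hzero, tsum_zero, mul_zero] at hpos
      exact lt_irrefl 0 hpos
    · intro hmem
      obtain ⟨n, hn⟩ := exists_pow_pos q hq μ hmem
      refine mul_pos (Real.exp_pos _) (Summable.tsum_pos hsum hnonneg n ?_)
      exact mul_pos (div_pos (pow_pos ht n) (by positivity)) hn
end
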